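/- Strong unique continuation at infinity: let $u$ be a smooth solution of $\partial_t u = \mathcal{L}_\phi u$ on $M \times [a,\infty)$, $M$ a closed manifold. If $u$ vanishes to infinite order at infinity, i.e., $\lim_{t\to\infty} e^{ct} I(t) = 0$ for every constant $c > 0$, then $u \equiv 0$. -/
import Mathlib


/- STATEMENT 8.  Strong unique continuation at infinity, abstract closed-manifold setting
(μ = e^{-φ} dV_g, gradu = ∇u, Lu = 𝓛_φ u, gradLu = ∇𝓛_φ u) on M × [a,∞):
if e^{ct} I(t) → 0 as t → ∞ for every c > 0, where I(t) = ∫ |u|² e^{-φ},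
then u ≡ 0 (μ-a.e. at each time). -/
open MeasureTheory Filter
open scoped RealInnerProductSpace

private lemma suc_core (I B C : ℝ → ℝ) (a t₀ t1 : ℝ) (ha : a ≤ t₀) (h01 : t₀ ≤ t1)
    (hI' : ∀ t ∈ Set.Ici a, HasDerivAt I (2 * B t) t)
    (hB' : ∀ t ∈ Set.Ici a, HasDerivAt B (2 * C t) t)
    (hCS : ∀ t, (B t) ^ 2 ≤ I t * C t)
    (hpos : ∀ t ∈ Set.Icc t₀ t1, 0 < I t) :
    I t₀ * Real.exp (2 * (B t₀ / I t₀) * (t1 - t₀)) ≤ I t1 := by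
  set K := B t₀ / I t₀ with hK
  have hsub : Set.Icc t₀ t1 ⊆ Set.Ici a := fun t ht => le_trans ha ht.1
  set N : ℝ → ℝ := fun t => B t / I t with hNdef
  have hN : ∀ t ∈ Set.Icc t₀ t1,
      HasDerivAt N ((2 * C t * I t - B t * (2 * B t)) / (I t) ^ 2) t := fun t ht =>
    (hB' t (hsub ht)).div (hI' t (hsub ht)) (ne_of_gt (hpos t ht))
  have hIoo : interior (Set.Icc t₀ t1) = Set.Ioo t₀ t1 := interior_Icc
  have hNmono : MonotoneOn N (Set.Icc t₀ t1) := by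
    apply monotoneOn_of_deriv_nonneg (convex_Icc _ _)
    · exact fun t ht => (hN t ht).continuousAt.continuousWithinAt
    · rw [hIoo]
      exact fun t ht => ((hN t (Set.Ioo_subset_Icc_self ht)).differentiableAt).differentiableWithinAt
    · rw [hIoo]
      intro t ht
      rw [(hN t (Set.Ioo_subset_Icc_self ht)).deriv]
      have h1 := hCS t
      have h2 := (hpos t (Set.Ioo_subset_Icc_self ht))
      apply div_nonneg _ (sq_nonneg _)
      nlinarith
  set Mf : ℝ → ℝ := fun t => Real.log (I t) - 2 * K * t with hMdef
  have hM : ∀ t ∈ Set.Icc t₀ t1, HasDerivAt Mf (2 * B t / I t - 2 * K) t := by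
    intro t ht
    have h1 : HasDerivAt (fun s => Real.log (I s)) (2 * B t / I t) t :=
      (hI' t (hsub ht)).log (ne_of_gt (hpos t ht))
    have h2 : HasDerivAt (fun s : ℝ => 2 * K * s) (2 * K) t := by
      simpa using (hasDerivAt_id t).const_mul (2 * K)
    exact h1.sub h2
  have hMmono : MonotoneOn Mf (Set.Icc t₀ t1) := by
    apply monotoneOn_of_deriv_nonneg (convex_Icc _ _)
    · exact fun t ht => (hM t ht).continuousAt.continuousWithinAt
    · rw [hIoo]
      exact fun t ht => ((hM t (Set.Ioo_subset_Icc_self ht)).differentiableAt).differentiableWithinAt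
    · rw [hIoo]
      intro t ht
      rw [(hM t (Set.Ioo_subset_Icc_self ht)).deriv]
      have hmem : t ∈ Set.Icc t₀ t1 := Set.Ioo_subset_Icc_self ht
      have h0 : t₀ ∈ Set.Icc t₀ t1 := ⟨le_rfl, h01⟩
      have hNle : K ≤ B t / I t := hNmono h0 hmem ht.1.le
      have h2 : 2 * B t / I t = 2 * (B t / I t) := by ring
      rw [h2]
      linarith
  have hle : Mf t₀ ≤ Mf t1 := hMmono ⟨le_rfl, h01⟩ ⟨h01, le_rfl⟩ h01
  have h3 : Real.log (I t₀) + 2 * K * (t1 - t₀) ≤ Real.log (I t1) := by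
    simp only [hMdef] at hle; linarith
  calc I t₀ * Real.exp (2 * K * (t1 - t₀))
      = Real.exp (Real.log (I t₀) + 2 * K * (t1 - t₀)) := by
        rw [Real.exp_add, Real.exp_log (hpos t₀ ⟨le_rfl, h01⟩)]
    _ ≤ Real.exp (Real.log (I t1)) := Real.exp_le_exp.2 h3
    _ = I t1 := Real.exp_log (hpos t1 ⟨h01, le_rfl⟩)

private lemma suc_freq (I B C : ℝ → ℝ) (a t₀ : ℝ) (ha : a ≤ t₀)
    (hI' : ∀ t ∈ Set.Ici a, HasDerivAt I (2 * B t) t)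
    (hB' : ∀ t ∈ Set.Ici a, HasDerivAt B (2 * C t) t)
    (hCS : ∀ t, (B t) ^ 2 ≤ I t * C t)
    (hI0 : ∀ t, 0 ≤ I t)
    (hpos : 0 < I t₀) :
    ∀ t, t₀ ≤ t → I t₀ * Real.exp (2 * (B t₀ / I t₀) * (t - t₀)) ≤ I t := by
  by_cases hZ : ∃ s, t₀ ≤ s ∧ I s = 0
  · exfalso
    set Z : Set ℝ := {s | t₀ ≤ s ∧ I s = 0} with hZdef
    have hne : Z.Nonempty := hZ
    have hbdd : BddBelow Z := ⟨t₀, fun z hz => hz.1⟩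
    set s := sInf Z with hs
    have hs_ge : t₀ ≤ s := le_csInf hne fun z hz => hz.1
    have hconts : ContinuousAt I s := (hI' s (le_trans ha hs_ge)).continuousAt
    have hIs : I s = 0 := by
      have h1 : s ∈ closure Z := csInf_mem_closure hne hbdd
      have h2 : I s ∈ closure (I '' Z) :=
        hconts.continuousWithinAt.mem_closure_image h1
      have h3 : I '' Z ⊆ {(0 : ℝ)} := by rintro y ⟨z, hz, rfl⟩; exact hz.2
      have h4 : closure (I '' Z) ⊆ {(0 : ℝ)} := by
        calc closure (I '' Z) ⊆ closure {(0:ℝ)} := closure_mono h3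
          _ = {(0:ℝ)} := closure_singleton
      exact h4 h2
    have hs_gt : t₀ < s := by
      rcases lt_or_eq_of_le hs_ge with h | h
      · exact h
      · exfalso; rw [← h] at hIs; exact absurd hIs (ne_of_gt hpos)
    have hpos_Ico : ∀ t ∈ Set.Ico t₀ s, 0 < I t := by
      intro t ht
      rcases lt_or_eq_of_le (hI0 t) with h | h
      · exact h
      · exfalso; exact notMem_of_lt_csInf ht.2 hbdd ⟨ht.1, h.symm⟩
    have hbound : ∀ t ∈ Set.Ico t₀ s,
        I t₀ * Real.exp (2 * (B t₀ / I t₀) * (t - t₀)) ≤ I t := by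
      intro t ht
      exact suc_core I B C a t₀ t ha ht.1 hI' hB' hCS
        (fun r hr => hpos_Ico r ⟨hr.1, lt_of_le_of_lt hr.2 ht.2⟩)
    have hne' : (nhdsWithin s (Set.Iio s)).NeBot := nhdsLT_neBot s
    have htI : Tendsto I (nhdsWithin s (Set.Iio s)) (nhds (I s)) :=
      hconts.continuousWithinAt.tendsto
    have htg : Tendsto (fun t => I t₀ * Real.exp (2 * (B t₀ / I t₀) * (t - t₀)))
        (nhdsWithin s (Set.Iio s)) (nhds (I t₀ * Real.exp (2 * (B t₀ / I t₀) * (s - t₀)))) := by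
      apply Tendsto.mono_left _ nhdsWithin_le_nhds
      exact (Continuous.mul continuous_const
        ((Real.continuous_exp.comp ((continuous_const.mul
          (continuous_id.sub continuous_const))))) ).tendsto s
    have hev : ∀ᶠ t in nhdsWithin s (Set.Iio s),
        I t₀ * Real.exp (2 * (B t₀ / I t₀) * (t - t₀)) ≤ I t := by
      filter_upwards [Ioo_mem_nhdsLT_of_mem (Set.mem_Ioc.2 ⟨hs_gt, le_rfl⟩)] with t ht
      exact hbound t ⟨ht.1.le, ht.2⟩
    have hfin := le_of_tendsto_of_tendsto htg htI hev
    rw [hIs] at hfin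
    have hp : 0 < I t₀ * Real.exp (2 * (B t₀ / I t₀) * (s - t₀)) :=
      mul_pos hpos (Real.exp_pos _)
    linarith
  · push_neg at hZ
    intro t ht
    exact suc_core I B C a t₀ t ha ht hI' hB' hCS fun r hr =>
      lt_of_le_of_ne (hI0 r) (Ne.symm (hZ r hr.1))


theorem strong_unique_continuation_at_infinity
    {M : Type*} [MeasurableSpace M] (μ : Measure M) [IsFiniteMeasure μ]
    {V : Type*} [NormedAddCommGroup V] [InnerProductSpace ℝ V]
    (a : ℝ)
    (u Lu : ℝ → M → ℝ) (gradu gradLu : ℝ → M → V)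
    (hu2 : ∀ t, Integrable (fun x => (u t x) ^ 2) μ)
    (hgrad2 : ∀ t, Integrable (fun x => ‖gradu t x‖ ^ 2) μ)
    (hLu2 : ∀ t, Integrable (fun x => (Lu t x) ^ 2) μ)
    (huLu : ∀ t, Integrable (fun x => u t x * Lu t x) μ)
    (hgg : ∀ t, Integrable (fun x => ⟪gradu t x, gradLu t x⟫) μ)
    -- the drift heat equation ∂ₜ u = 𝓛_φ u
    (hheat : ∀ x t, HasDerivAt (fun s => u s x) (Lu t x) t)
    -- self-adjointness of 𝓛_φ (integration by parts on the closed manifold)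
    (hibp : ∀ t, ∫ x, u t x * Lu t x ∂μ = -∫ x, ‖gradu t x‖ ^ 2 ∂μ)
    (hibp2 : ∀ t, ∫ x, ⟪gradu t x, gradLu t x⟫ ∂μ = -∫ x, (Lu t x) ^ 2 ∂μ)
    -- differentiation under the integral sign for I and D
    (hDI : ∀ t ∈ Set.Ici a,
      HasDerivAt (fun s => ∫ x, (u s x) ^ 2 ∂μ)
        (∫ x, 2 * (u t x * Lu t x) ∂μ) t)
    (hDD : ∀ t ∈ Set.Ici a,
      HasDerivAt (fun s => -∫ x, ‖gradu s x‖ ^ 2 ∂μ)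
        (-∫ x, 2 * ⟪gradu t x, gradLu t x⟫ ∂μ) t)
    -- u vanishes to infinite order at infinity
    (hvanish : ∀ c : ℝ, 0 < c →
      Tendsto (fun t => Real.exp (c * t) * ∫ x, (u t x) ^ 2 ∂μ) atTop (nhds 0)) :
    ∀ t ∈ Set.Ici a, ∀ᵐ x ∂μ, u t x = 0 := by
  set I : ℝ → ℝ := fun t => ∫ x, (u t x) ^ 2 ∂μ with hIdef
  set B : ℝ → ℝ := fun t => ∫ x, u t x * Lu t x ∂μ with hBdef
  set C : ℝ → ℝ := fun t => ∫ x, (Lu t x) ^ 2 ∂μ with hCdef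
  have hI0 : ∀ t, 0 ≤ I t := fun t => integral_nonneg fun x => sq_nonneg _
  have hI' : ∀ t ∈ Set.Ici a, HasDerivAt I (2 * B t) t := by
    intro t ht
    have h := hDI t ht
    rwa [integral_const_mul] at h
  have hBeq : B = fun s => -∫ x, ‖gradu s x‖ ^ 2 ∂μ := funext hibp
  have hB' : ∀ t ∈ Set.Ici a, HasDerivAt B (2 * C t) t := by
    intro t ht
    have h := hDD t ht
    rw [← hBeq] at h
    have hval : -∫ x, 2 * ⟪gradu t x, gradLu t x⟫ ∂μ = 2 * C t := by
      rw [integral_const_mul, hibp2 t]; ring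
    rwa [hval] at h
  have hCS : ∀ t, (B t) ^ 2 ≤ I t * C t := by
    intro t
    have hquad : ∀ r : ℝ, 0 ≤ C t * (r * r) + 2 * B t * r + I t := by
      intro r
      have hexp : (fun x => (r * Lu t x + u t x) ^ 2)
          = fun x => r ^ 2 * (Lu t x) ^ 2 + 2 * r * (u t x * Lu t x) + (u t x) ^ 2 := by
        funext x; ring
      have hint1 : Integrable (fun x => r ^ 2 * (Lu t x) ^ 2) μ := (hLu2 t).const_mul _
      have hint2 : Integrable (fun x => 2 * r * (u t x * Lu t x)) μ := (huLu t).const_mul _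
      have h0 : 0 ≤ ∫ x, (r * Lu t x + u t x) ^ 2 ∂μ := integral_nonneg fun x => sq_nonneg _
      rw [hexp] at h0
      have hint12 : Integrable (fun x => r ^ 2 * (Lu t x) ^ 2 + 2 * r * (u t x * Lu t x)) μ :=
        hint1.add hint2
      rw [integral_add hint12 (hu2 t), integral_add hint1 hint2,
        integral_const_mul, integral_const_mul] at h0
      calc (0:ℝ) ≤ r ^ 2 * C t + 2 * r * B t + I t := h0
        _ = C t * (r * r) + 2 * B t * r + I t := by ring
    have hd := discrim_le_zero hquad
    rw [discrim] at hd
    nlinarith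
  have key : ∀ t₀ ∈ Set.Ici a, I t₀ = 0 := by
    intro t₀ ht₀
    by_contra hne
    have hpos : 0 < I t₀ := lt_of_le_of_ne (hI0 t₀) (Ne.symm hne)
    set K := B t₀ / I t₀ with hKdef
    have hb := suc_freq I B C a t₀ ht₀ hI' hB' hCS hI0 hpos
    set c : ℝ := 2 * |K| + 1 with hcdef
    have hc : 0 < c := by positivity
    have habs : -|K| ≤ K := neg_abs_le K
    have h1 : ∀ᶠ t in atTop, I t₀ * Real.exp (c * t₀) ≤ Real.exp (c * t) * I t := by
      rw [eventually_atTop]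
      refine ⟨t₀, fun t ht => ?_⟩
      have hbt := hb t ht
      calc I t₀ * Real.exp (c * t₀)
          ≤ I t₀ * Real.exp (c * t + 2 * K * (t - t₀)) := by
            apply mul_le_mul_of_nonneg_left _ hpos.le
            apply Real.exp_le_exp.2
            nlinarith
        _ = Real.exp (c * t) * (I t₀ * Real.exp (2 * K * (t - t₀))) := by
            rw [Real.exp_add]; ring
        _ ≤ Real.exp (c * t) * I t := by
            apply mul_le_mul_of_nonneg_left _ (Real.exp_pos _).le
            exact hbt
    have hε : 0 < I t₀ * Real.exp (c * t₀) := mul_pos hpos (Real.exp_pos _)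
    have h2 : ∀ᶠ t in atTop, Real.exp (c * t) * I t < I t₀ * Real.exp (c * t₀) :=
      (hvanish c hc).eventually (gt_mem_nhds hε)
    obtain ⟨t, h1t, h2t⟩ := (h1.and h2).exists
    linarith
  intro t ht
  have hIz : I t = 0 := key t ht
  have hae : (fun x => (u t x) ^ 2) =ᵐ[μ] 0 :=
    (integral_eq_zero_iff_of_nonneg (fun x => sq_nonneg (u t x)) (hu2 t)).1 hIz
  filter_upwards [hae] with x hx
  have : (u t x) ^ 2 = 0 := hx
  exact sq_eq_zero_iff.mp this
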